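/- For integers a, b, c with c ≥ a ≥ 1 and b ≥ 0, the sum over w from 0 to a of (w * binomial(a+b+w, w) * binomial(c-w, a-w)) equals binomial(1+a+b+c, a) * a * (1+a+b) / (2+b+c). -/

import Mathlib

open Finset

lemma hockey (n : ℕ) : ∀ a : ℕ, ∑ w ∈ range (a+1), (n+w).choose w = (n+a+1).choose a := by
  intro a
  induction a with
  | zero => simp
  | succ a ih =>
    rw [Finset.sum_range_succ, ih]
    have h : n + (a+1) + 1 = (n + a + 1) + 1 := by ring
    rw [h, Nat.choose_succ_succ (n+a+1) a]
    congr 2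

lemma key : ∀ c a b : ℕ, a ≤ c →
    ∑ w ∈ range (a+1), (a+b+w).choose w * (c-w).choose (a-w) = (a+b+c+1).choose a := by
  intro c
  induction c with
  | zero =>
    intro a b h
    interval_cases a
    simp
  | succ c ih =>
    intro a b h
    rcases Nat.lt_or_ge a (c+1) with hlt | hge
    · have hac : a ≤ c := Nat.lt_succ_iff.mp hlt
      cases a with
      | zero => simp
      | succ a' =>
        have ha'c : a' ≤ c := Nat.le_of_succ_le hac
        rw [Finset.sum_range_succ]
        have hsplit : ∀ w ∈ range (a'+1),
            (a'+1+b+w).choose w * (c+1-w).choose (a'+1-w)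
            = (a'+(b+1)+w).choose w * (c-w).choose (a'-w)
              + (a'+1+b+w).choose w * (c-w).choose (a'+1-w) := by
          intro w hw
          rw [Finset.mem_range] at hw
          have hw' : w ≤ a' := Nat.lt_succ_iff.mp hw
          have h1 : c+1-w = (c-w)+1 := by omega
          have h2 : a'+1-w = (a'-w)+1 := by omega
          rw [h1, h2, Nat.choose_succ_succ (c-w) (a'-w), Nat.mul_add]
          congr 3
          ring
        rw [Finset.sum_congr rfl hsplit, Finset.sum_add_distrib]
        rw [ih a' (b+1) ha'c]
        have hlast : (a'+1+b+(a'+1)).choose (a'+1) * (c+1-(a'+1)).choose (a'+1-(a'+1))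
            = (a'+1+b+(a'+1)).choose (a'+1) * (c-(a'+1)).choose (a'+1-(a'+1)) := by
          simp
        rw [add_assoc, hlast, ← Finset.sum_range_succ (fun w => (a'+1+b+w).choose w * (c-w).choose (a'+1-w)) (a'+1)]
        rw [ih (a'+1) b hac]
        have h : a'+1+b+(c+1)+1 = (a'+(b+1)+c+1) + 1 := by ring
        rw [h]
        have h3 : a'+(b+1)+c+1 = a'+1+b+c+1 := by ring
        rw [Nat.choose_succ_succ (a'+(b+1)+c+1) a', h3]
    · have ha : a = c+1 := le_antisymm h hge
      subst ha
      have hsplit : ∀ w ∈ range (c+1+1),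
          (c+1+b+w).choose w * (c+1-w).choose (c+1-w) = (c+1+b+w).choose w := by
        intro w hw
        rw [Nat.choose_self, Nat.mul_one]
      rw [Finset.sum_congr rfl hsplit, hockey (c+1+b) (c+1)]

theorem stmt_1 (a b c : ℕ) (ha : 1 ≤ a) (hac : a ≤ c) :
    ∑ w ∈ Finset.range (a + 1),
      ((w : ℚ) * (Nat.choose (a + b + w) w : ℚ) * (Nat.choose (c - w) (a - w) : ℚ))
      = (Nat.choose (1 + a + b + c) a : ℚ) * a * (1 + a + b) / (2 + b + c) := by
  obtain ⟨a', rfl⟩ : ∃ a', a = a' + 1 := ⟨a - 1, by omega⟩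
  obtain ⟨c', rfl⟩ : ∃ c', c = c' + 1 := ⟨c - 1, by omega⟩
  have ha'c : a' ≤ c' := by omega
  have hnat : ∑ w ∈ range (a'+1+1), w * (a'+1+b+w).choose w * ((c'+1-w)).choose (a'+1-w)
      = (a'+1+b+1) * ((a'+b+c'+3).choose a') := by
    rw [Finset.sum_range_succ']
    simp only [Nat.zero_mul, Nat.add_zero]
    have hterm : ∀ v ∈ range (a'+1),
        (v+1) * (a'+1+b+(v+1)).choose (v+1) * (c'+1-(v+1)).choose (a'+1-(v+1))
        = (a'+1+b+1) * ((a'+(b+2)+v).choose v * (c'-v).choose (a'-v)) := by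
      intro v hv
      rw [Finset.mem_range] at hv
      have h1 : c'+1-(v+1) = c'-v := by omega
      have h2 : a'+1-(v+1) = a'-v := by omega
      rw [h1, h2]
      have h3 : a'+1+b+(v+1) = a'+(b+2)+v := by ring
      rw [h3]
      have h4 := Nat.choose_succ_right_eq (a'+(b+2)+v) v
      have h5 : a'+(b+2)+v - v = a'+b+2 := by omega
      rw [h5] at h4
      calc (v+1) * (a'+(b+2)+v).choose (v+1) * (c'-v).choose (a'-v)
          = ((a'+(b+2)+v).choose (v+1) * (v+1)) * (c'-v).choose (a'-v) := by ring
        _ = ((a'+(b+2)+v).choose v * (a'+b+2)) * (c'-v).choose (a'-v) := by rw [h4]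
        _ = _ := by ring
    rw [Finset.sum_congr rfl hterm, ← Finset.mul_sum, key c' a' (b+2) ha'c]
    congr 2
    ring
  have hQ : ∑ w ∈ Finset.range (a'+1+1),
      ((w : ℚ) * (Nat.choose (a'+1+b+w) w : ℚ) * (Nat.choose (c'+1-w) (a'+1-w) : ℚ))
      = ((a'+1+b+1 : ℕ) : ℚ) * (((a'+b+c'+3).choose a' : ℕ) : ℚ) := by
    exact_mod_cast congrArg (fun n : ℕ => (n : ℚ)) hnat
  rw [hQ]
  have hch : (((a'+b+c'+3).choose (a'+1) : ℕ) : ℚ) * (a'+1) = (((a'+b+c'+3).choose a' : ℕ) : ℚ) * (b+c'+3) := by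
    have h := Nat.choose_succ_right_eq (a'+b+c'+3) a'
    have hs : a'+b+c'+3 - a' = b+c'+3 := by omega
    rw [hs] at h
    exact_mod_cast congrArg (fun n : ℕ => (n : ℚ)) h
  have hne : (2:ℚ) + (b:ℚ) + ((c'+1 : ℕ) : ℚ) ≠ 0 := by positivity
  rw [eq_div_iff hne]
  rw [show 1 + (a'+1) + b + (c'+1) = a'+b+c'+3 from by ring]
  push_cast at hch ⊢
  linear_combination (-((a':ℚ)+b+2)) * hch
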